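/- Let $m>0$. There exists a constant $C>0$ (depending only on $m$) such that for every nonnegative function $f:\mathbb{R}\to\mathbb{R}$ which is integrable and differentiable with derivative $f'$ square-integrable, one has $f\in L^{m+1}(\mathbb{R})$ and $\|f\|_{L^{m+1}}^{3(m+1)/m}\le C\,\|f\|_{L^1}^{(m+3)/m}\,\|f'\|_{L^2}^2$. -/

import Mathlib

open MeasureTheory

private lemma sz_sqrt_sq {a : ℝ} (ha : 0 ≤ a) : (a ^ ((1:ℝ)/2)) ^ 2 = a := by
  rw [← Real.rpow_natCast (a ^ ((1:ℝ)/2)) 2, ← Real.rpow_mul ha]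
  norm_num

/-- The derivative of `f^{3/2}`. -/
private lemma sz_hasDeriv {f : ℝ → ℝ} (hDiff : Differentiable ℝ f) (x : ℝ) :
    HasDerivAt (fun y => f y ^ ((3:ℝ)/2)) (deriv f x * (3/2) * f x ^ ((1:ℝ)/2)) x := by
  have h := (hDiff x).hasDerivAt.rpow_const (p := 3/2) (Or.inr (by norm_num))
  convert h using 2
  norm_num

/-- Integrability of `f^{1/2} |f'|`. -/
private lemma sz_int_T {f : ℝ → ℝ} (h0 : ∀ x, 0 ≤ f x) (hInt : Integrable f)
    (hDiff : Differentiable ℝ f) (hD2 : Integrable (fun x => (deriv f x) ^ 2)) :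
    Integrable (fun x => f x ^ ((1:ℝ)/2) * |deriv f x|) := by
  have hmeas : AEStronglyMeasurable (fun x => f x ^ ((1:ℝ)/2) * |deriv f x|) volume := by
    exact ((hDiff.continuous.rpow_const (fun x => Or.inr (by norm_num))).aestronglyMeasurable).mul
      ((measurable_deriv f).abs.aestronglyMeasurable)
  refine Integrable.mono' ((hInt.add hD2).const_mul (1/2)) hmeas ?_
  filter_upwards with x
  simp only [Pi.add_apply]
  have ha : 0 ≤ f x ^ ((1:ℝ)/2) := Real.rpow_nonneg (h0 x) _
  have ha2 : (f x ^ ((1:ℝ)/2)) ^ 2 = f x := sz_sqrt_sq (h0 x)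
  have hb : 0 ≤ |deriv f x| := abs_nonneg _
  have hb2 : |deriv f x| ^ 2 = (deriv f x) ^ 2 := sq_abs _
  rw [Real.norm_eq_abs, abs_of_nonneg (mul_nonneg ha hb)]
  nlinarith [sq_nonneg (f x ^ ((1:ℝ)/2) - |deriv f x|)]

/-- The sup bound: `f(x)^{3/2} ≤ (3/2) ∫ f^{1/2} |f'|`. -/
private lemma sz_sup_bound {f : ℝ → ℝ} (h0 : ∀ x, 0 ≤ f x) (hInt : Integrable f)
    (hDiff : Differentiable ℝ f) (hD2 : Integrable (fun x => (deriv f x) ^ 2)) (x : ℝ) :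
    f x ^ ((3:ℝ)/2) ≤ (3/2) * ∫ y, f y ^ ((1:ℝ)/2) * |deriv f y| := by
  set T : ℝ := ∫ y, f y ^ ((1:ℝ)/2) * |deriv f y| with hT
  have hTint := sz_int_T h0 hInt hDiff hD2
  -- integrability of g' = deriv f * (3/2) * f^{1/2}
  have hg'eq : ∀ y, deriv f y * (3/2) * f y ^ ((1:ℝ)/2)
      = (3/2) * (f y ^ ((1:ℝ)/2) * deriv f y) := by intro y; ring
  have hg'int : Integrable (fun y => deriv f y * (3/2) * f y ^ ((1:ℝ)/2)) := by
    have : Integrable (fun y => f y ^ ((1:ℝ)/2) * deriv f y) := by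
      refine Integrable.mono' hTint ?_ ?_
      · exact ((hDiff.continuous.rpow_const (fun x => Or.inr (by norm_num))).aestronglyMeasurable).mul
          ((measurable_deriv f).aestronglyMeasurable)
      · filter_upwards with y
        rw [Real.norm_eq_abs, abs_mul, abs_of_nonneg (Real.rpow_nonneg (h0 y) _)]
    simpa only [hg'eq] using this.const_mul (3/2)
  refine le_of_forall_pos_le_add ?_
  intro ε hε
  -- find a point a < x where f a ^ (3/2) < ε
  obtain ⟨a, hax, hfa⟩ : ∃ a, a < x ∧ f a < min ε 1 := by
    by_contra hcon
    push_neg at hcon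
    have hsub : Set.Iio x ⊆ {a : ℝ | min ε 1 ≤ f a} := fun a ha => hcon a ha
    have hfin := hInt.measure_ge_lt_top (lt_min hε one_pos)
    have := (measure_mono hsub).trans_lt hfin
    simp [Real.volume_Iio] at this
  have hfa32 : f a ^ ((3:ℝ)/2) ≤ ε := by
    rcases eq_or_lt_of_le (h0 a) with h | h
    · rw [← h, Real.zero_rpow (by norm_num)]; exact hε.le
    · calc f a ^ ((3:ℝ)/2) ≤ f a ^ (1:ℝ) :=
            Real.rpow_le_rpow_of_exponent_ge h (le_of_lt (lt_of_lt_of_le hfa (min_le_right _ _)))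
              (by norm_num)
        _ = f a := Real.rpow_one _
        _ ≤ ε := le_of_lt (lt_of_lt_of_le hfa (min_le_left _ _))
  have hftc : ∫ t in a..x, deriv f t * (3/2) * f t ^ ((1:ℝ)/2)
      = f x ^ ((3:ℝ)/2) - f a ^ ((3:ℝ)/2) :=
    intervalIntegral.integral_eq_sub_of_hasDerivAt (fun t _ => sz_hasDeriv hDiff t)
      (hg'int.intervalIntegrable)
  have habs : ∫ t in a..x, deriv f t * (3/2) * f t ^ ((1:ℝ)/2) ≤ (3/2) * T := by
    have h1 : ∫ t in a..x, deriv f t * (3/2) * f t ^ ((1:ℝ)/2)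
        ≤ |∫ t in a..x, deriv f t * (3/2) * f t ^ ((1:ℝ)/2)| := le_abs_self _
    have h2 : |∫ t in a..x, deriv f t * (3/2) * f t ^ ((1:ℝ)/2)|
        ≤ ∫ t in a..x, |deriv f t * (3/2) * f t ^ ((1:ℝ)/2)| :=
      intervalIntegral.abs_integral_le_integral_abs hax.le
    have h3 : ∫ t in a..x, |deriv f t * (3/2) * f t ^ ((1:ℝ)/2)|
        ≤ ∫ t, |deriv f t * (3/2) * f t ^ ((1:ℝ)/2)| := by
      rw [intervalIntegral.integral_of_le hax.le]
      exact setIntegral_le_integral hg'int.abs (Filter.Eventually.of_forall fun t => abs_nonneg _)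
    have h4 : ∫ t, |deriv f t * (3/2) * f t ^ ((1:ℝ)/2)| = (3/2) * T := by
      rw [hT, ← integral_const_mul]
      congr 1
      funext t
      rw [abs_mul, abs_mul, abs_of_nonneg (Real.rpow_nonneg (h0 t) _)]
      have : |(3:ℝ)/2| = 3/2 := by norm_num
      rw [this]; ring
    linarith
  linarith [hftc ▸ habs]

theorem sz_nagy_inequality (m : ℝ) (hm : 0 < m) :
    ∃ C : ℝ, 0 < C ∧ ∀ f : ℝ → ℝ, (∀ x, 0 ≤ f x) → Integrable f →
      Differentiable ℝ f → Integrable (fun x => (deriv f x) ^ 2) →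
      Integrable (fun x => f x ^ (m + 1)) ∧
      (∫ x, f x ^ (m + 1)) ^ (3 / m) ≤
        C * (∫ x, f x) ^ ((m + 3) / m) * ∫ x, (deriv f x) ^ 2 := by
  refine ⟨9/4, by norm_num, fun f h0 hInt hDiff hD2 => ?_⟩
  have hm1 : m + 1 ≠ 0 := by linarith
  have hcont : Continuous f := hDiff.continuous
  set I : ℝ := ∫ x, f x with hI
  set J : ℝ := ∫ x, (deriv f x) ^ 2 with hJ
  have hI0 : 0 ≤ I := integral_nonneg h0
  have hJ0 : 0 ≤ J := integral_nonneg fun x => sq_nonneg _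
  by_cases hIz : I = 0
  · -- f is identically zero
    have hfz : f = 0 := by
      have hae : f =ᵐ[volume] 0 := (integral_eq_zero_iff_of_nonneg h0 hInt).mp hIz
      exact (hcont.ae_eq_iff_eq volume continuous_const).mp hae
    have hf1 : (fun x => f x ^ (m+1)) = fun _ => (0:ℝ) := by
      funext x
      rw [hfz]
      simp [Real.zero_rpow hm1]
    constructor
    · rw [hf1]
      exact integrable_zero ℝ ℝ (volume : Measure ℝ)
    · have h1 : (∫ x, f x ^ (m+1)) = 0 := by rw [hf1]; simp
      rw [h1, hIz, Real.zero_rpow (by positivity : (3:ℝ)/m ≠ 0),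
        Real.zero_rpow (by positivity : (m+3)/m ≠ 0)]
      simp
  · have hIpos : 0 < I := lt_of_le_of_ne hI0 (Ne.symm hIz)
    set T : ℝ := ∫ y, f y ^ ((1:ℝ)/2) * |deriv f y| with hT
    have hTint := sz_int_T h0 hInt hDiff hD2
    have hT0 : 0 ≤ T := integral_nonneg fun y =>
      mul_nonneg (Real.rpow_nonneg (h0 y) _) (abs_nonneg _)
    have hsup := sz_sup_bound h0 hInt hDiff hD2
    -- Young's inequality with parameter: T ≤ (ε I + ε⁻¹ J)/2 for ε > 0
    have hyoung : ∀ ε : ℝ, 0 < ε → T ≤ (ε * I + ε⁻¹ * J) / 2 := by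
      intro ε hε
      have hpt : ∀ y, f y ^ ((1:ℝ)/2) * |deriv f y|
          ≤ (ε * f y + ε⁻¹ * (deriv f y) ^ 2) / 2 := by
        intro y
        have ha : 0 ≤ f y ^ ((1:ℝ)/2) := Real.rpow_nonneg (h0 y) _
        have ha2 : (f y ^ ((1:ℝ)/2)) ^ 2 = f y := sz_sqrt_sq (h0 y)
        have hb2 : |deriv f y| ^ 2 = (deriv f y) ^ 2 := sq_abs _
        have key : 2 * ε * (f y ^ ((1:ℝ)/2) * |deriv f y|)
            ≤ ε ^ 2 * f y + (deriv f y) ^ 2 := by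
          nlinarith [sq_nonneg (ε * f y ^ ((1:ℝ)/2) - |deriv f y|)]
        have h1 : ε⁻¹ * (2 * ε * (f y ^ ((1:ℝ)/2) * |deriv f y|))
            ≤ ε⁻¹ * (ε ^ 2 * f y + deriv f y ^ 2) :=
          mul_le_mul_of_nonneg_left key (inv_nonneg.mpr hε.le)
        have h2 : ε⁻¹ * (2 * ε * (f y ^ ((1:ℝ)/2) * |deriv f y|))
            = 2 * (f y ^ ((1:ℝ)/2) * |deriv f y|) := by
          field_simp
        have h3 : ε⁻¹ * (ε ^ 2 * f y + deriv f y ^ 2)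
            = ε * f y + ε⁻¹ * deriv f y ^ 2 := by
          field_simp
        rw [h2, h3] at h1
        linarith
      have hrint : Integrable (fun y => (ε * f y + ε⁻¹ * (deriv f y) ^ 2) / 2) :=
        ((hInt.const_mul ε).add (hD2.const_mul ε⁻¹)).div_const 2
      calc T ≤ ∫ y, (ε * f y + ε⁻¹ * (deriv f y) ^ 2) / 2 :=
            integral_mono hTint hrint hpt
        _ = (ε * I + ε⁻¹ * J) / 2 := by
            rw [integral_div, integral_add (hInt.const_mul ε) (hD2.const_mul ε⁻¹),
              integral_const_mul, integral_const_mul]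
    -- J must be positive (else f ≡ 0, contradicting I > 0)
    have hJpos : 0 < J := by
      rcases eq_or_lt_of_le hJ0 with h | h
      · exfalso
        have hTz : T = 0 := by
          refine le_antisymm ?_ hT0
          refine le_of_forall_pos_le_add ?_
          intro δ hδ
          have := hyoung (δ / I) (div_pos hδ hIpos)
          rw [← h] at this
          calc T ≤ (δ / I * I + (δ / I)⁻¹ * 0) / 2 := this
            _ = δ / 2 := by field_simp; ring
            _ ≤ 0 + δ := by linarith
        have hfz : ∀ x, f x = 0 := by
          intro x
          by_contra hne
          have hpos : 0 < f x := lt_of_le_of_ne (h0 x) (Ne.symm hne)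
          have := hsup x
          rw [← hT, hTz] at this
          have : f x ^ ((3:ℝ)/2) ≤ 0 := by linarith
          exact absurd this (not_le.mpr (Real.rpow_pos_of_pos hpos _))
        have : I = 0 := by
          rw [hI]
          simp [hfz]
        exact hIz this
      · exact h
    -- Cauchy–Schwarz via optimal ε
    have hCS : T ≤ Real.sqrt I * Real.sqrt J := by
      have hsI : 0 < Real.sqrt I := Real.sqrt_pos.mpr hIpos
      have hsJ : 0 < Real.sqrt J := Real.sqrt_pos.mpr hJpos
      have hε : (0:ℝ) < Real.sqrt J / Real.sqrt I := div_pos hsJ hsI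
      have := hyoung _ hε
      have hII : Real.sqrt I * Real.sqrt I = I := Real.mul_self_sqrt hI0
      have hJJ : Real.sqrt J * Real.sqrt J = J := Real.mul_self_sqrt hJ0
      have h1 : Real.sqrt J / Real.sqrt I * I = Real.sqrt I * Real.sqrt J := by
        rw [div_mul_eq_mul_div, mul_div_assoc, Real.div_sqrt, mul_comm]
      have h2 : (Real.sqrt J / Real.sqrt I)⁻¹ * J = Real.sqrt I * Real.sqrt J := by
        rw [inv_div, div_mul_eq_mul_div, mul_div_assoc, Real.div_sqrt]
      rw [h1, h2] at this
      linarith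
    -- the sup bound constant
    set M : ℝ := ((3/2) * T) ^ ((2:ℝ)/3) with hM
    have hM0 : 0 ≤ M := Real.rpow_nonneg (by linarith) _
    have hfM : ∀ x, f x ≤ M := by
      intro x
      have h1 : (f x ^ ((3:ℝ)/2)) ^ ((2:ℝ)/3) ≤ M :=
        Real.rpow_le_rpow (Real.rpow_nonneg (h0 x) _) (hsup x) (by norm_num)
      calc f x = (f x ^ ((3:ℝ)/2)) ^ ((2:ℝ)/3) := by
            rw [← Real.rpow_mul (h0 x)]
            norm_num
        _ ≤ M := h1
    -- pointwise bound f^{m+1} ≤ M^m f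
    have hpt : ∀ x, f x ^ (m + 1) ≤ M ^ m * f x := by
      intro x
      have : f x ^ (m + 1) = f x ^ m * f x := by
        rw [Real.rpow_add' (h0 x) hm1, Real.rpow_one]
      rw [this]
      exact mul_le_mul_of_nonneg_right (Real.rpow_le_rpow (h0 x) (hfM x) hm.le) (h0 x)
    have hrpow_meas : AEStronglyMeasurable (fun x => f x ^ (m+1)) volume :=
      (hcont.rpow_const (fun x => Or.inr (by linarith))).aestronglyMeasurable
    have hIntP : Integrable (fun x => f x ^ (m + 1)) := by
      refine Integrable.mono' (hInt.const_mul (M ^ m)) hrpow_meas ?_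
      filter_upwards with x
      rw [Real.norm_eq_abs, abs_of_nonneg (Real.rpow_nonneg (h0 x) _)]
      exact hpt x
    refine ⟨hIntP, ?_⟩
    have hP0 : 0 ≤ ∫ x, f x ^ (m+1) :=
      integral_nonneg fun x => Real.rpow_nonneg (h0 x) _
    have hPle : ∫ x, f x ^ (m+1) ≤ M ^ m * I := by
      calc ∫ x, f x ^ (m+1) ≤ ∫ x, M ^ m * f x :=
            integral_mono hIntP (hInt.const_mul _) hpt
        _ = M ^ m * I := integral_const_mul _ _
    have hM3 : M ^ (3:ℝ) ≤ 9/4 * I * J := by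
      have h1 : M ^ (3:ℝ) = ((3/2) * T) ^ (2:ℝ) := by
        rw [hM, ← Real.rpow_mul (by linarith)]
        norm_num
      rw [h1, Real.rpow_two]
      have h2 : ((3/2) * T) ^ 2 ≤ ((3/2) * (Real.sqrt I * Real.sqrt J)) ^ 2 := by
        apply sq_le_sq'
        · nlinarith [Real.sqrt_nonneg I, Real.sqrt_nonneg J]
        · nlinarith
      calc ((3/2) * T) ^ 2 ≤ ((3/2) * (Real.sqrt I * Real.sqrt J)) ^ 2 := h2
        _ = 9/4 * I * J := by
            rw [mul_pow, mul_pow, Real.sq_sqrt hI0, Real.sq_sqrt hJ0]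
            ring
    calc (∫ x, f x ^ (m+1)) ^ ((3:ℝ)/m)
        ≤ (M ^ m * I) ^ ((3:ℝ)/m) :=
          Real.rpow_le_rpow hP0 hPle (by positivity)
      _ = (M ^ m) ^ ((3:ℝ)/m) * I ^ ((3:ℝ)/m) :=
          Real.mul_rpow (Real.rpow_nonneg hM0 _) hI0
      _ = M ^ (3:ℝ) * I ^ ((3:ℝ)/m) := by
          rw [← Real.rpow_mul hM0]
          congr 1
          field_simp
      _ ≤ (9/4 * I * J) * I ^ ((3:ℝ)/m) :=
          mul_le_mul_of_nonneg_right hM3 (Real.rpow_nonneg hI0 _)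
      _ = 9/4 * I ^ ((m+3)/m) * J := by
          have hexp : (m+3)/m = 1 + 3/m := by field_simp
          rw [hexp, Real.rpow_add hIpos, Real.rpow_one]
          ring
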